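/- (Carlitz) Let q = 2^r with r a positive integer, and let a ∈ 𝔽_q^*. Then K₂(λ;a) = K(λ;a)² − q. -/

import Mathlib

open Finset Matrix

/-- The quadratic form `θ⁺(x) = ∑ i, x_i x_{n+i}` on `F^{2n}` (columns indexed by `Fin n ⊕ Fin n`). -/
def thetaPlus (F : Type) [Field F] (n : ℕ) (x : Fin n ⊕ Fin n → F) : F :=
  ∑ i : Fin n, x (Sum.inl i) * x (Sum.inr i)

/-- The orthogonal group `O⁺(2n,q)`: invertible matrices preserving `θ⁺`. -/
noncomputable def OplusGrp (F : Type) [Field F] [Fintype F] [DecidableEq F] (n : ℕ) :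
    Finset (Matrix (Fin n ⊕ Fin n) (Fin n ⊕ Fin n) F) := by
  classical
  exact Finset.univ.filter (fun w => IsUnit w ∧
    ∀ x : Fin n ⊕ Fin n → F, thetaPlus F n (w.mulVec x) = thetaPlus F n x)

/-- `SO⁺(2n,q)`: the kernel of `δ⁺(w) = Tr(B ᵗC)` on `O⁺(2n,q)`,
where `w = [[A,B],[C,D]]` in `n × n` blocks. -/
noncomputable def SOplusGrp (F : Type) [Field F] [Fintype F] [DecidableEq F] (n : ℕ) :
    Finset (Matrix (Fin n ⊕ Fin n) (Fin n ⊕ Fin n) F) := by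
  classical
  exact (OplusGrp F n).filter
    (fun w => Matrix.trace (Matrix.toBlocks₁₂ w * (Matrix.toBlocks₂₁ w)ᵀ) = 0)

/-- The trace map `tr(x) = x + x² + ⋯ + x^{2^{r−1}}`, valued in `𝔽₂ = {0,1} ⊆ F`. -/
def trF (F : Type) [Field F] (r : ℕ) (x : F) : F := ∑ i ∈ Finset.range r, x ^ 2 ^ i

/-- The canonical additive character `λ(x) = (−1)^{tr(x)} ∈ {±1} ⊆ ℤ`. -/
noncomputable def lam (F : Type) [Field F] (r : ℕ) (x : F) : ℤ := by
  classical exact if trF F r x = 0 then 1 else -1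

/-- The trace map `tr` viewed as a function into `𝔽₂ = ZMod 2`. -/
noncomputable def tr2 (F : Type) [Field F] (r : ℕ) (x : F) : ZMod 2 := by
  classical exact if trF F r x = 0 then 0 else 1

/-- The Kloosterman sum `K(λ;a) = ∑_{α ∈ F*} λ(α + aα⁻¹)`. -/
noncomputable def Kl (F : Type) [Field F] [Fintype F] (r : ℕ) (a : F) : ℤ := by
  classical
  exact ∑ α ∈ Finset.univ.filter (fun α : F => α ≠ 0), lam F r (α + a * α⁻¹)

/-- The `m`-dimensional Kloosterman sum
`K_m(λ;a) = ∑_{α₁,…,α_m ∈ F*} λ(α₁ + ⋯ + α_m + aα₁⁻¹⋯α_m⁻¹)`;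
for `m = 0` this is `K₀(λ;a) = λ(a)`. -/
noncomputable def Klm (F : Type) [Field F] [Fintype F] (r m : ℕ) (a : F) : ℤ := by
  classical
  exact ∑ v ∈ Finset.univ.filter (fun v : Fin m → F => ∀ i, v i ≠ 0),
    lam F r ((∑ i, v i) + a * (∏ i, v i)⁻¹)

/-- The power moment `MK^h = ∑_{a ∈ F*} K(λ;a)^h`. -/
noncomputable def MK (F : Type) [Field F] [Fintype F] (r h : ℕ) : ℤ := by
  classical exact ∑ a ∈ Finset.univ.filter (fun a : F => a ≠ 0), (Kl F r a) ^ h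

/-- The power moment `MK₂^h = ∑_{a ∈ F*} K₂(λ;a)^h` of 2-dimensional Kloosterman sums. -/
noncomputable def MK2 (F : Type) [Field F] [Fintype F] (r h : ℕ) : ℤ := by
  classical exact ∑ a ∈ Finset.univ.filter (fun a : F => a ≠ 0), (Klm F r 2 a) ^ h

/-- The binary code `C(G) = {u ∈ 𝔽₂^G : ∑_{g ∈ G} u_g Tr(g) = 0 in F}`. -/
noncomputable def code (F : Type) [Field F] [Fintype F] [DecidableEq F]
    {ι : Type} [Fintype ι] [DecidableEq ι] (G : Finset (Matrix ι ι F)) :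
    Finset (↥G → ZMod 2) := by
  classical
  exact Finset.univ.filter
    (fun u => ∑ g : ↥G, (u g).val • Matrix.trace (g : Matrix ι ι F) = 0)

/-- Number of codewords of Hamming weight `j` in the code `C(G)`. -/
noncomputable def wtCount (F : Type) [Field F] [Fintype F] [DecidableEq F]
    {ι : Type} [Fintype ι] [DecidableEq ι] (G : Finset (Matrix ι ι F)) (j : ℕ) : ℕ := by
  classical
  exact ((code F G).filter
    (fun u => (Finset.univ.filter (fun g : ↥G => u g = 1)).card = j)).card

/-- `t! · S(h,t)` where `S(h,t)` is the Stirling number of the second kind,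
`S(h,t) = (1/t!) ∑_{j=0}^{t} (−1)^{t−j} C(t,j) j^h`. -/
def tS (h t : ℕ) : ℤ :=
  ∑ j ∈ Finset.range (t + 1), (-1 : ℤ) ^ (t - j) * (t.choose j : ℤ) * (j : ℤ) ^ h

/-- Binomial coefficient with integer arguments: `0` whenever `k < 0` or `k > n`. -/
def ichoose (n k : ℤ) : ℤ := if 0 ≤ k ∧ k ≤ n then (n.toNat.choose k.toNat : ℤ) else 0

set_option linter.unusedSectionVars false



section
variable {F : Type} [Field F] [Fintype F] [DecidableEq F] {r : ℕ}

lemma charF (hF : Fintype.card F = 2 ^ r) : CharP F 2 := by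
  obtain ⟨p, hp⟩ := CharP.exists F
  haveI := hp
  have hprime : p.Prime := (CharP.char_is_prime F p)
  haveI : Fact p.Prime := ⟨hprime⟩
  obtain ⟨n, hn⟩ := FiniteField.card F p
  have hd : p ∣ 2 ^ r := by
    rw [← hF, hn.2]; exact dvd_pow_self p n.2.ne'
  have hp2 : p = 2 :=
    (Nat.prime_dvd_prime_iff_eq hprime Nat.prime_two).mp (hprime.dvd_of_dvd_pow hd)
  rwa [hp2] at hp

variable (hF : Fintype.card F = 2 ^ r) (hr : 1 ≤ r)
include hF

lemma trF_add (x y : F) : trF F r (x + y) = trF F r x + trF F r y := by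
  haveI := charF hF
  haveI : Fact (Nat.Prime 2) := ⟨Nat.prime_two⟩
  unfold trF
  rw [← Finset.sum_add_distrib]
  exact Finset.sum_congr rfl fun i _ => add_pow_char_pow x y 2 i

lemma trF_sq (x : F) : trF F r (x ^ 2) = trF F r x := by
  have hxr : x ^ 2 ^ r = x := by
    have := FiniteField.pow_card x; rwa [hF] at this
  have h1 : ∀ i, (x ^ 2) ^ 2 ^ i = x ^ 2 ^ (i + 1) := by
    intro i; rw [← pow_mul, pow_succ, mul_comm 2 (2^i), mul_comm]
  have key : trF F r (x ^ 2) + x ^ 2 ^ 0 = trF F r x + x ^ 2 ^ r := by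
    unfold trF
    rw [Finset.sum_congr rfl fun i _ => h1 i]
    rw [← Finset.sum_range_succ' (fun j => x ^ 2 ^ j) r, Finset.sum_range_succ]
  rw [hxr, pow_zero, pow_one] at key
  exact add_right_cancel key

lemma trF_01 (x : F) : trF F r x = 0 ∨ trF F r x = 1 := by
  haveI := charF hF
  haveI : Fact (Nat.Prime 2) := ⟨Nat.prime_two⟩
  have h : trF F r x ^ 2 = trF F r x := by
    unfold trF
    rw [sum_pow_char]
    have := trF_sq hF x
    unfold trF at this
    rw [← this]
    exact Finset.sum_congr rfl fun i _ => by rw [← pow_mul, ← pow_mul, mul_comm]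
  have : trF F r x * (trF F r x - 1) = 0 := by ring_nf; linear_combination h
  rcases mul_eq_zero.mp this with h | h
  · exact Or.inl h
  · exact Or.inr (by linear_combination h)

end

section
variable {F : Type} [Field F] [Fintype F] [DecidableEq F] {r : ℕ}
variable (hF : Fintype.card F = 2 ^ r) (hr : 1 ≤ r)
include hF

lemma lam_zero : lam F r 0 = 1 := by
  unfold lam trF; simp [zero_pow (pow_ne_zero _ (two_ne_zero))]

lemma lam_mul (x y : F) : lam F r (x + y) = lam F r x * lam F r y := by
  haveI := charF hF
  unfold lam
  rw [trF_add hF]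
  rcases trF_01 hF x with h1 | h1 <;> rcases trF_01 hF y with h2 | h2 <;>
    simp [h1, h2, CharTwo.add_self_eq_zero]

lemma lam_sq (x : F) : lam F r (x ^ 2) = lam F r x := by
  unfold lam; rw [trF_sq hF]

lemma lam_pm (x : F) : lam F r x = 1 ∨ lam F r x = -1 := by
  unfold lam; split <;> simp

include hr in
lemma trF_exists : ∃ b : F, trF F r b ≠ 0 := by
  by_contra h
  push_neg at h
  set P : Polynomial F := ∑ i ∈ Finset.range r, Polynomial.X ^ 2 ^ i with hP
  have heval : ∀ x : F, P.eval x = 0 := by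
    intro x
    have : P.eval x = trF F r x := by
      rw [hP]; simp [trF, Polynomial.eval_finset_sum]
    rw [this, h]
  have hdeg : P.natDegree < Fintype.card F := by
    rw [hF]
    calc P.natDegree ≤ 2 ^ (r - 1) := by
          apply Polynomial.natDegree_sum_le_of_forall_le
          intro i hi
          rw [Polynomial.natDegree_X_pow]
          have : i < r := Finset.mem_range.mp hi
          exact Nat.pow_le_pow_right (by norm_num) (by omega)
      _ < 2 ^ r := Nat.pow_lt_pow_right (by norm_num) (by omega)
  have hP0 : P = 0 :=
    Polynomial.eq_zero_of_natDegree_lt_card_of_eval_eq_zero P Function.injective_id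
      (fun x => heval x) hdeg
  have : P.coeff 1 = 1 := by
    rw [hP, Polynomial.finset_sum_coeff]
    rw [Finset.sum_eq_single 0]
    · simp
    · intro i _ hi
      rw [Polynomial.coeff_X_pow]
      have h2 : 2 ^ i ≠ 1 := by
        intro hcon
        have := Nat.one_lt_two_pow (n := i) (by omega)
        omega
      simp [Ne.symm h2]
    · intro hcon; exact absurd (Finset.mem_range.mpr (by omega)) hcon
  rw [hP0] at this
  simp at this

end

section
variable {F : Type} [Field F] [Fintype F] [DecidableEq F] {r : ℕ}
variable (hF : Fintype.card F = 2 ^ r) (hr : 1 ≤ r)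
include hF hr

lemma sum_lam_zero : ∑ x : F, lam F r x = 0 := by
  obtain ⟨b, hb⟩ := trF_exists hF hr
  have hlb : lam F r b = -1 := by unfold lam; simp [hb]
  have key : ∑ x : F, lam F r x = ∑ x : F, lam F r (b + x) :=
    (Fintype.sum_equiv (Equiv.addLeft b) _ _ (fun x => rfl)).symm
  have : ∑ x : F, lam F r (b + x) = - ∑ x : F, lam F r x := by
    rw [← Finset.sum_neg_distrib]
    exact Finset.sum_congr rfl fun x _ => by rw [lam_mul hF, hlb]; ring
  omega

lemma sum_lam_mul {u : F} (hu : u ≠ 0) : ∑ x : F, lam F r (u * x) = 0 := by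
  rw [← sum_lam_zero hF hr]
  exact Fintype.sum_equiv (Equiv.mulLeft₀ u hu) _ _ (fun x => rfl)

lemma sum_lam_mul_ne {u : F} (hu : u ≠ 0) :
    ∑ x ∈ Finset.univ.filter (fun x : F => x ≠ 0), lam F r (u * x) = -1 := by
  have := sum_lam_mul hF hr hu
  rw [← Finset.sum_filter_add_sum_filter_not Finset.univ (fun x : F => x ≠ 0)] at this
  simp only [not_ne_iff, Finset.filter_eq'] at this
  simp only [Finset.mem_univ, if_true, Finset.sum_singleton, mul_zero] at this
  rw [lam_zero hF] at this
  omega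

end

section
variable {F : Type} [Field F] [Fintype F] [DecidableEq F] {r : ℕ}
variable (hF : Fintype.card F = 2 ^ r) (hr : 1 ≤ r)
include hF hr

lemma AS_card (c : F) :
    ((Finset.univ.filter (fun z : F => z ^ 2 + z = c)).card : ℤ) = 1 + lam F r c := by
  haveI := charF hF
  have hle : ∀ d : F, ((Finset.univ.filter (fun z : F => z ^ 2 + z = d)).card : ℤ)
      ≤ 1 + lam F r d := by
    intro d
    by_cases htr : trF F r d = 0
    · have hlam : lam F r d = 1 := by unfold lam; simp [htr]
      rw [hlam]
      norm_num
      rcases Finset.eq_empty_or_nonempty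
        (Finset.univ.filter (fun z : F => z ^ 2 + z = d)) with he | ⟨z, hz⟩
      · simp [he]
      · have hsub : Finset.univ.filter (fun w : F => w ^ 2 + w = d) ⊆ {z, z + 1} := by
          intro w hw
          simp only [Finset.mem_filter, Finset.mem_univ, true_and] at hw hz
          have h2 : (2 : F) = 0 := by exact_mod_cast CharP.cast_eq_zero F 2
          have hprod : (w + z) * (w + z + 1) = 0 := by
            have heq : w ^ 2 + w = z ^ 2 + z := by rw [hw, hz]
            linear_combination heq + (z ^ 2 + w * z + z) * h2
          rcases mul_eq_zero.mp hprod with h | h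
          · have hwz : w = z := by linear_combination h - z * h2
            simp [hwz]
          · have hwz : w = z + 1 := by linear_combination h - (z + 1) * h2
            simp [hwz]
        calc _ ≤ ({z, z+1} : Finset F).card := Finset.card_le_card hsub
          _ ≤ 2 := Finset.card_insert_le _ _ |>.trans (by simp)
    · have hlam : lam F r d = -1 := by unfold lam; simp [htr]
      have hempty : Finset.univ.filter (fun z : F => z ^ 2 + z = d) = ∅ := by
        rw [Finset.filter_eq_empty_iff]
        intro z _ hz
        apply htr
        rw [← hz, trF_add hF, trF_sq hF]
        exact CharTwo.add_self_eq_zero _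
      rw [hempty, hlam]
      simp
  by_contra hne
  have hlt : ((Finset.univ.filter (fun z : F => z ^ 2 + z = c)).card : ℤ)
      < 1 + lam F r c := lt_of_le_of_ne (hle c) hne
  have hsum1 : ∑ d : F, ((Finset.univ.filter (fun z : F => z ^ 2 + z = d)).card : ℤ)
      = (Fintype.card F : ℤ) := by
    rw [← Nat.cast_sum]
    norm_cast
    rw [← Finset.card_eq_sum_card_fiberwise (f := fun z : F => z ^ 2 + z)
      (s := Finset.univ) (t := Finset.univ) (fun x _ => Finset.mem_univ _)]
    rfl
  have hsum2 : ∑ d : F, (1 + lam F r d) = (Fintype.card F : ℤ) := by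
    rw [Finset.sum_add_distrib, sum_lam_zero hF hr]
    simp
  have : ∑ d : F, ((Finset.univ.filter (fun z : F => z ^ 2 + z = d)).card : ℤ)
      < ∑ d : F, (1 + lam F r d) :=
    Finset.sum_lt_sum (fun d _ => hle d) ⟨c, Finset.mem_univ c, hlt⟩
  omega

end

section main
variable {F : Type} [Field F] [Fintype F] [DecidableEq F] {r : ℕ}
variable (hF : Fintype.card F = 2 ^ r) (hr : 1 ≤ r)

lemma klm2_expand (a : F) : Klm F r 2 a =
    ∑ y ∈ Finset.univ.filter (fun x : F => x ≠ 0),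
      ∑ x ∈ Finset.univ.filter (fun x : F => x ≠ 0), lam F r (x + y + a * (x * y)⁻¹) := by
  classical
  rw [Klm]
  rw [← Finset.sum_product']
  refine Finset.sum_nbij' (i := fun v : Fin 2 → F => (v 1, v 0))
    (j := fun p : F × F => ![p.2, p.1]) ?_ ?_ ?_ ?_ ?_
  · intro v hv
    simp only [Finset.mem_filter, Finset.mem_univ, true_and] at hv ⊢
    rw [Finset.mem_product]
    simp only [Finset.mem_filter, Finset.mem_univ, true_and]
    exact ⟨hv 1, hv 0⟩
  · intro p hp
    rw [Finset.mem_product] at hp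
    simp only [Finset.mem_filter, Finset.mem_univ, true_and] at hp ⊢
    intro i
    fin_cases i <;> simp [hp.1, hp.2]
  case refine_3 => intro v _; funext i; fin_cases i <;> rfl
  case refine_4 => intro p _; rfl
  case refine_5 =>
    intro v hv
    simp only [Fin.sum_univ_two, Fin.prod_univ_two]

end main

section main2
variable {F : Type} [Field F] [Fintype F] [DecidableEq F] {r : ℕ}
variable (hF : Fintype.card F = 2 ^ r) (hr : 1 ≤ r)
include hF hr

lemma sum_G {a : F} (ha : a ≠ 0) :
    ∑ s ∈ Finset.univ.filter (fun x : F => x ≠ 0),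
      (∑ x ∈ Finset.univ.filter (fun x : F => x ≠ 0), lam F r (x + a * s * x⁻¹)) = 1 := by
  rw [Finset.sum_comm]
  have step : ∀ x ∈ Finset.univ.filter (fun x : F => x ≠ 0),
      ∑ s ∈ Finset.univ.filter (fun x : F => x ≠ 0), lam F r (x + a * s * x⁻¹)
      = - lam F r x := by
    intro x hx
    simp only [Finset.mem_filter, Finset.mem_univ, true_and] at hx
    have : ∀ s : F, lam F r (x + a * s * x⁻¹) = lam F r x * lam F r ((a * x⁻¹) * s) := by
      intro s
      rw [← lam_mul hF]
      congr 1
      ring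
    rw [Finset.sum_congr rfl (fun s _ => this s), ← Finset.mul_sum,
      sum_lam_mul_ne hF hr (mul_ne_zero ha (inv_ne_zero hx))]
    ring
  rw [Finset.sum_congr rfl step, Finset.sum_neg_distrib]
  have := sum_lam_mul_ne hF hr (one_ne_zero (α := F))
  simp only [one_mul] at this
  rw [this]
  norm_num

end main2

section main3
variable {F : Type} [Field F] [Fintype F] [DecidableEq F] {r : ℕ}
variable (hF : Fintype.card F = 2 ^ r) (hr : 1 ≤ r)
include hF

lemma klm2_eq (a : F) : Klm F r 2 a =
    ∑ s ∈ Finset.univ.filter (fun x : F => x ≠ 0),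
      lam F r s⁻¹ * ∑ x ∈ Finset.univ.filter (fun x : F => x ≠ 0),
        lam F r (x + a * s * x⁻¹) := by
  classical
  rw [klm2_expand]
  have step1 : ∀ y ∈ Finset.univ.filter (fun x : F => x ≠ 0),
      ∑ x ∈ Finset.univ.filter (fun x : F => x ≠ 0), lam F r (x + y + a * (x * y)⁻¹)
      = lam F r y * ∑ x ∈ Finset.univ.filter (fun x : F => x ≠ 0),
          lam F r (x + a * y⁻¹ * x⁻¹) := by
    intro y hy
    simp only [Finset.mem_filter, Finset.mem_univ, true_and] at hy
    rw [Finset.mul_sum]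
    apply Finset.sum_congr rfl
    intro x hx
    simp only [Finset.mem_filter, Finset.mem_univ, true_and] at hx
    rw [← lam_mul hF]
    congr 1
    field_simp
    ring
  rw [Finset.sum_congr rfl step1]
  refine Finset.sum_nbij' (i := fun y : F => y⁻¹) (j := fun y : F => y⁻¹) ?_ ?_ ?_ ?_ ?_
  · intro ycd hy; simp only [Finset.mem_filter, Finset.mem_univ, true_and] at hy ⊢
    exact inv_ne_zero hy
  · intro y hy; simp only [Finset.mem_filter, Finset.mem_univ, true_and] at hy ⊢
    exact inv_ne_zero hy
  · intro y _; simp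
  · intro y _; simp
  · intro y hy
    simp only [Finset.mem_filter, Finset.mem_univ, true_and] at hy
    rw [inv_inv]

end main3

section main4
variable {F : Type} [Field F] [Fintype F] [DecidableEq F] {r : ℕ}
variable (hF : Fintype.card F = 2 ^ r) (hr : 1 ≤ r)
include hF

lemma card_Fs : ((Finset.univ.filter (fun x : F => x ≠ 0)).card : ℤ) = 2 ^ r - 1 := by
  rw [Finset.filter_ne', Finset.card_erase_of_mem (Finset.mem_univ _)]
  rw [Finset.card_univ, hF]
  have : 1 ≤ 2 ^ r := Nat.one_le_two_pow
  push_cast [Nat.cast_sub this]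
  ring

lemma ksq_eq {a : F} (ha : a ≠ 0) : (Kl F r a) ^ 2 =
    ((2 : ℤ) ^ r - 1) + ∑ y ∈ Finset.univ.filter (fun y : F => y ≠ 0 ∧ y ≠ 1),
      ∑ x ∈ Finset.univ.filter (fun x : F => x ≠ 0),
        lam F r (x + a * ((1 + y) ^ 2 * y⁻¹) * x⁻¹) := by
  classical
  haveI := charF hF
  have h2 : (2 : F) = 0 := by exact_mod_cast CharP.cast_eq_zero F 2
  have hne1 : ∀ y : F, y ≠ 1 → (1 : F) + y ≠ 0 := by
    intro y hy hcon
    exact hy (by linear_combination hcon - h2)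
  have hKl : Kl F r a = ∑ α ∈ Finset.univ.filter (fun α : F => α ≠ 0),
      lam F r (α + a * α⁻¹) := by
    rw [Kl]; congr 1; ext x; simp
  rw [hKl, sq, Finset.sum_mul_sum]
  have step1 : ∀ x ∈ Finset.univ.filter (fun x : F => x ≠ 0),
      ∑ y ∈ Finset.univ.filter (fun x : F => x ≠ 0),
        lam F r (x + a * x⁻¹) * lam F r (y + a * y⁻¹)
      = ∑ y ∈ Finset.univ.filter (fun x : F => x ≠ 0),
        lam F r ((1 + y) * (x + a * x⁻¹ * y⁻¹)) := by
    intro x hx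
    simp only [Finset.mem_filter, Finset.mem_univ, true_and] at hx
    refine Finset.sum_nbij' (i := fun y : F => a * x⁻¹ * y⁻¹)
      (j := fun y : F => a * x⁻¹ * y⁻¹) ?_ ?_ ?_ ?_ ?_
    case refine_1 =>
      intro y hy
      simp only [Finset.mem_filter, Finset.mem_univ, true_and] at hy ⊢
      exact mul_ne_zero (mul_ne_zero ha (inv_ne_zero hx)) (inv_ne_zero hy)
    case refine_2 =>
      intro y hy
      simp only [Finset.mem_filter, Finset.mem_univ, true_and] at hy ⊢
      exact mul_ne_zero (mul_ne_zero ha (inv_ne_zero hx)) (inv_ne_zero hy)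
    case refine_3 =>
      intro y hy
      simp only [Finset.mem_filter, Finset.mem_univ, true_and] at hy
      field_simp
    case refine_4 =>
      intro y hy
      simp only [Finset.mem_filter, Finset.mem_univ, true_and] at hy
      field_simp
    case refine_5 =>
      intro y hy
      simp only [Finset.mem_filter, Finset.mem_univ, true_and] at hy
      rw [← lam_mul hF]
      congr 1
      field_simp
      ring
  rw [Finset.sum_congr rfl step1, Finset.sum_comm]
  rw [← Finset.sum_filter_add_sum_filter_not
    (Finset.univ.filter (fun x : F => x ≠ 0)) (fun y : F => y = 1)]
  have hfilter1 : (Finset.univ.filter (fun x : F => x ≠ 0)).filter (fun y : F => y = 1)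
      = {1} := by
    ext y
    simp only [Finset.mem_filter, Finset.mem_univ, true_and, Finset.mem_singleton]
    constructor
    · rintro ⟨_, h⟩; exact h
    · rintro rfl; exact ⟨one_ne_zero, rfl⟩
  have hfilter2 : (Finset.univ.filter (fun x : F => x ≠ 0)).filter (fun y : F => ¬ y = 1)
      = Finset.univ.filter (fun y : F => y ≠ 0 ∧ y ≠ 1) := by
    ext y
    simp only [Finset.mem_filter, Finset.mem_univ, true_and]
  rw [hfilter1, hfilter2]
  have hpart1 : ∑ y ∈ ({1} : Finset F),
      ∑ x ∈ Finset.univ.filter (fun x : F => x ≠ 0),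
        lam F r ((1 + y) * (x + a * x⁻¹ * y⁻¹)) = (2 : ℤ) ^ r - 1 := by
    rw [Finset.sum_singleton]
    have : ∀ x : F, lam F r ((1 + 1) * (x + a * x⁻¹ * 1⁻¹)) = 1 := by
      intro x
      have h11 : (1 : F) + 1 = 0 := by linear_combination h2
      rw [h11, zero_mul, lam_zero hF]
    rw [Finset.sum_congr rfl (fun x _ => this x), Finset.sum_const, nsmul_eq_mul,
      mul_one]
    exact card_Fs hF
  have hpart2 : ∀ y ∈ Finset.univ.filter (fun y : F => y ≠ 0 ∧ y ≠ 1),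
      ∑ x ∈ Finset.univ.filter (fun x : F => x ≠ 0),
        lam F r ((1 + y) * (x + a * x⁻¹ * y⁻¹))
      = ∑ x ∈ Finset.univ.filter (fun x : F => x ≠ 0),
        lam F r (x + a * ((1 + y) ^ 2 * y⁻¹) * x⁻¹) := by
    intro y hy
    simp only [Finset.mem_filter, Finset.mem_univ, true_and] at hy
    obtain ⟨hy0, hy1⟩ := hy
    have h1y : (1 : F) + y ≠ 0 := hne1 y hy1
    refine Finset.sum_nbij' (i := fun x : F => (1 + y) * x)
      (j := fun x : F => (1 + y)⁻¹ * x) ?_ ?_ ?_ ?_ ?_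
    case refine_1 =>
      intro x hx
      simp only [Finset.mem_filter, Finset.mem_univ, true_and] at hx ⊢
      exact mul_ne_zero h1y hx
    case refine_2 =>
      intro x hx
      simp only [Finset.mem_filter, Finset.mem_univ, true_and] at hx ⊢
      exact mul_ne_zero (inv_ne_zero h1y) hx
    case refine_3 =>
      intro x hx
      field_simp
    case refine_4 =>
      intro x hx
      field_simp
    case refine_5 =>
      intro x hx
      simp only [Finset.mem_filter, Finset.mem_univ, true_and] at hx
      congr 1
      field_simp
  rw [hpart1, Finset.sum_congr rfl hpart2]

end main4

section main5
variable {F : Type} [Field F] [Fintype F] [DecidableEq F] {r : ℕ}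
variable (hF : Fintype.card F = 2 ^ r) (hr : 1 ≤ r)
include hF hr

lemma fiber_card {s : F} (hs : s ≠ 0) :
    (((Finset.univ.filter (fun y : F => y ≠ 0 ∧ y ≠ 1)).filter
      (fun y : F => (1 + y) ^ 2 * y⁻¹ = s)).card : ℤ) = 1 + lam F r s⁻¹ := by
  haveI := charF hF
  have h2 : (2 : F) = 0 := by exact_mod_cast CharP.cast_eq_zero F 2
  have hset : (Finset.univ.filter (fun y : F => y ≠ 0 ∧ y ≠ 1)).filter
      (fun y : F => (1 + y) ^ 2 * y⁻¹ = s)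
      = Finset.univ.filter (fun y : F => y ^ 2 + s * y + 1 = 0) := by
    ext y
    simp only [Finset.mem_filter, Finset.mem_univ, true_and]
    constructor
    · rintro ⟨⟨hy0, hy1⟩, hf⟩
      have hsy : (1 + y) ^ 2 = s * y := by
        field_simp at hf
        linear_combination hf
      linear_combination hsy + (s * y - y) * h2
    · intro hq
      have hy0 : y ≠ 0 := by
        rintro rfl
        simp at hq
      have hy1 : y ≠ 1 := by
        rintro rfl
        exact hs (by linear_combination hq - h2)
      refine ⟨⟨hy0, hy1⟩, ?_⟩
      field_simp
      linear_combination hq + (y - s * y) * h2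
  rw [hset]
  have hcard : (Finset.univ.filter (fun y : F => y ^ 2 + s * y + 1 = 0)).card
      = (Finset.univ.filter (fun z : F => z ^ 2 + z = s⁻¹ ^ 2)).card := by
    refine Finset.card_nbij' (i := fun y => y * s⁻¹) (j := fun z => s * z) ?_ ?_ ?_ ?_
    · intro y hy
      simp only [Finset.mem_coe, Finset.mem_filter, Finset.mem_univ, true_and] at hy ⊢
      field_simp
      linear_combination hy - h2
    · intro z hz
      simp only [Finset.mem_coe, Finset.mem_filter, Finset.mem_univ, true_and] at hz ⊢
      have hs2 : s ^ 2 * s⁻¹ ^ 2 = 1 := by field_simp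
      linear_combination s ^ 2 * hz + hs2 + h2
    · intro y hy
      simp only [Finset.mem_coe, Finset.mem_filter, Finset.mem_univ, true_and] at hy
      field_simp
    · intro z hz
      simp only [Finset.mem_coe, Finset.mem_filter, Finset.mem_univ, true_and] at hz
      field_simp
  rw [hcard, AS_card hF hr, ← lam_sq hF s⁻¹]

lemma fiber_sum (a : F) :
    ∑ y ∈ Finset.univ.filter (fun y : F => y ≠ 0 ∧ y ≠ 1),
      ∑ x ∈ Finset.univ.filter (fun x : F => x ≠ 0),
        lam F r (x + a * ((1 + y) ^ 2 * y⁻¹) * x⁻¹)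
    = ∑ s ∈ Finset.univ.filter (fun x : F => x ≠ 0),
        (1 + lam F r s⁻¹) *
          ∑ x ∈ Finset.univ.filter (fun x : F => x ≠ 0),
            lam F r (x + a * s * x⁻¹) := by
  haveI := charF hF
  have h2 : (2 : F) = 0 := by exact_mod_cast CharP.cast_eq_zero F 2
  have hmaps : ∀ y ∈ Finset.univ.filter (fun y : F => y ≠ 0 ∧ y ≠ 1),
      (1 + y) ^ 2 * y⁻¹ ∈ Finset.univ.filter (fun x : F => x ≠ 0) := by
    intro y hy
    simp only [Finset.mem_filter, Finset.mem_univ, true_and] at hy ⊢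
    obtain ⟨hy0, hy1⟩ := hy
    have h1y : (1 : F) + y ≠ 0 := by
      intro hcon
      have : y = 1 := by linear_combination hcon - h2
      exact hy1 this
    exact mul_ne_zero (pow_ne_zero _ h1y) (inv_ne_zero hy0)
  rw [← Finset.sum_fiberwise_of_maps_to hmaps
    (fun y => ∑ x ∈ Finset.univ.filter (fun x : F => x ≠ 0),
      lam F r (x + a * ((1 + y) ^ 2 * y⁻¹) * x⁻¹))]
  apply Finset.sum_congr rfl
  intro s hs
  simp only [Finset.mem_filter, Finset.mem_univ, true_and] at hs
  have hinner : ∀ y ∈ (Finset.univ.filter (fun y : F => y ≠ 0 ∧ y ≠ 1)).filter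
      (fun y : F => (1 + y) ^ 2 * y⁻¹ = s),
      ∑ x ∈ Finset.univ.filter (fun x : F => x ≠ 0),
        lam F r (x + a * ((1 + y) ^ 2 * y⁻¹) * x⁻¹)
      = ∑ x ∈ Finset.univ.filter (fun x : F => x ≠ 0),
        lam F r (x + a * s * x⁻¹) := by
    intro y hy
    rw [Finset.mem_filter] at hy
    rw [hy.2]
  rw [Finset.sum_congr rfl hinner, Finset.sum_const, nsmul_eq_mul, fiber_card hF hr hs]

end main5


theorem stmt8 (r : ℕ) (hr : 1 ≤ r) (F : Type) [Field F] [Fintype F] [DecidableEq F]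
    (hF : Fintype.card F = 2 ^ r) (a : F) (ha : a ≠ 0) :
    Klm F r 2 a = (Kl F r a) ^ 2 - (2 ^ r : ℤ) := by
  classical
  rw [klm2_eq hF a, ksq_eq hF ha, fiber_sum hF hr a]
  have expand : ∑ s ∈ Finset.univ.filter (fun x : F => x ≠ 0),
      (1 + lam F r s⁻¹) * ∑ x ∈ Finset.univ.filter (fun x : F => x ≠ 0),
        lam F r (x + a * s * x⁻¹)
      = (∑ s ∈ Finset.univ.filter (fun x : F => x ≠ 0),
          ∑ x ∈ Finset.univ.filter (fun x : F => x ≠ 0), lam F r (x + a * s * x⁻¹))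
        + ∑ s ∈ Finset.univ.filter (fun x : F => x ≠ 0),
            lam F r s⁻¹ * ∑ x ∈ Finset.univ.filter (fun x : F => x ≠ 0),
              lam F r (x + a * s * x⁻¹) := by
    rw [← Finset.sum_add_distrib]
    apply Finset.sum_congr rfl
    intro s _
    ring
  rw [expand, sum_G hF hr ha]
  ring
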